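/- arXiv:1303.3791 — 10 statements merged into one kernel-verified Lean document; each statement's English description precedes it below -/
import Mathlib

section
/- For all real numbers a ≥ b > 0 and 0 < q < 1, we have a^(q/2) - a^(q-1) * b^(1-q/2) ≤ (a - b)^(q/2). -/
theorem stmt_0 (a b q : ℝ) (hba : b ≤ a) (hb : 0 < b) (hq0 : 0 < q) (hq1 : q < 1) :
    a ^ (q / 2) - a ^ (q - 1) * b ^ (1 - q / 2) ≤ (a - b) ^ (q / 2) := by
  have ha : 0 < a := hb.trans_le hba
  -- step 1: a^(q/2-1)*b ≤ a^(q-1) * b^(1-q/2)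
  have h1 : a ^ (q / 2 - 1) * b ≤ a ^ (q - 1) * b ^ (1 - q / 2) := by
    have hexp : a ^ (-(q / 2)) ≤ b ^ (-(q / 2)) :=
      Real.rpow_le_rpow_of_nonpos hb hba (by linarith)
    calc a ^ (q / 2 - 1) * b = a ^ (q - 1) * a ^ (-(q / 2)) * b := by
          rw [← Real.rpow_add ha]; ring_nf
      _ ≤ a ^ (q - 1) * b ^ (-(q / 2)) * b := by
          have hp := Real.rpow_pos_of_pos ha (q - 1)
          exact mul_le_mul_of_nonneg_right (mul_le_mul_of_nonneg_left hexp hp.le) hb.le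
      _ = a ^ (q - 1) * b ^ (1 - q / 2) := by
          rw [mul_assoc, ← Real.rpow_add_one hb.ne']; ring_nf
  -- step 2: a^(q/2) - a^(q/2-1)*b = a^(q/2-1)*(a-b)
  have h2 : a ^ (q / 2) = a ^ (q / 2 - 1) * a := by
    rw [← Real.rpow_add_one ha.ne']; ring_nf
  have h3 : a ^ (q / 2 - 1) * (a - b) ≤ (a - b) ^ (q / 2) := by
    rcases eq_or_lt_of_le hba with heq | hlt
    · simp [← heq, Real.zero_rpow (by positivity : q / 2 ≠ 0)]
    · have hab : 0 < a - b := by linarith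
      have hle : a ^ (q / 2 - 1) ≤ (a - b) ^ (q / 2 - 1) :=
        Real.rpow_le_rpow_of_nonpos hab (by linarith) (by linarith)
      calc a ^ (q / 2 - 1) * (a - b) ≤ (a - b) ^ (q / 2 - 1) * (a - b) := by
            nlinarith
        _ = (a - b) ^ (q / 2) := by
            rw [← Real.rpow_add_one hab.ne']; ring_nf
  nlinarith
end

section
/- For all 0 < c ≤ 1 and 0 < q < 1, it holds that 1 - c^(1-q/2) ≤ (1 - c)^(q/2). -/
theorem stmt_1 (c q : ℝ) (hc0 : 0 < c) (hc1 : c ≤ 1) (hq0 : 0 < q) (hq1 : q < 1) :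
    1 - c ^ (1 - q / 2) ≤ (1 - c) ^ (q / 2) := by
  have h1 : c ≤ c ^ (1 - q / 2) := by
    calc c = c ^ (1:ℝ) := (Real.rpow_one c).symm
    _ ≤ c ^ (1 - q / 2) := Real.rpow_le_rpow_of_exponent_ge hc0 hc1 (by linarith)
  rcases eq_or_lt_of_le hc1 with h | h
  · subst h
    simp [Real.zero_rpow (by positivity : q / 2 ≠ 0)]
  · calc 1 - c ^ (1 - q/2) ≤ 1 - c := by linarith
    _ = (1 - c) ^ (1:ℝ) := (Real.rpow_one _).symm
    _ ≤ (1 - c) ^ (q/2) := Real.rpow_le_rpow_of_exponent_ge (by linarith) (by linarith) (by linarith)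
end

section
/- Let α, β > 0. Then for all x, y ≥ 0, (y^α - x^α)(y^β - x^β) ≥ (4αβ/(α+β)^2) * (y^((α+β)/2) - x^((α+β)/2))^2. -/
open MeasureTheory intervalIntegral Set

lemma rpow_intInt {x y : ℝ} (hx : 0 < x) (hxy : x ≤ y) (c : ℝ) :
    IntervalIntegrable (fun t : ℝ => t ^ c) volume x y := by
  apply ContinuousOn.intervalIntegrable
  intro t ht
  rw [Set.uIcc_of_le hxy] at ht
  exact (Real.continuousAt_rpow_const t c (Or.inl (by linarith [ht.1]))).continuousWithinAt

lemma ptwise {α β l t : ℝ} (ht : 0 < t) (hl : 0 < l) :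
    2 * t ^ ((α + β) / 2 - 1) ≤ l * t ^ (α - 1) + l⁻¹ * t ^ (β - 1) := by
  have hsl : Real.sqrt l * Real.sqrt l⁻¹ = 1 := by
    rw [← Real.sqrt_mul hl.le, mul_inv_cancel₀ hl.ne', Real.sqrt_one]
  have e1 : t ^ ((α - 1) / 2) * t ^ ((β - 1) / 2) = t ^ ((α + β) / 2 - 1) := by
    rw [← Real.rpow_add ht]; ring_nf
  have e2 : t ^ ((α - 1) / 2) * t ^ ((α - 1) / 2) = t ^ (α - 1) := by
    rw [← Real.rpow_add ht]; ring_nf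
  have e3 : t ^ ((β - 1) / 2) * t ^ ((β - 1) / 2) = t ^ (β - 1) := by
    rw [← Real.rpow_add ht]; ring_nf
  have h := two_mul_le_add_sq (Real.sqrt l * t ^ ((α - 1) / 2))
    (Real.sqrt l⁻¹ * t ^ ((β - 1) / 2))
  have sl : Real.sqrt l * Real.sqrt l = l := Real.mul_self_sqrt hl.le
  have sli : Real.sqrt l⁻¹ * Real.sqrt l⁻¹ = l⁻¹ := Real.mul_self_sqrt (by positivity)
  have r1 : (Real.sqrt l * t ^ ((α - 1) / 2)) ^ 2 = l * t ^ (α - 1) := by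
    rw [mul_pow, pow_two, pow_two, sl, e2]
  have r2 : (Real.sqrt l⁻¹ * t ^ ((β - 1) / 2)) ^ 2 = l⁻¹ * t ^ (β - 1) := by
    rw [mul_pow, pow_two, pow_two, sli, e3]
  have r0 : 2 * (Real.sqrt l * t ^ ((α - 1) / 2)) * (Real.sqrt l⁻¹ * t ^ ((β - 1) / 2))
      = 2 * t ^ ((α + β) / 2 - 1) := by
    calc 2 * (Real.sqrt l * t ^ ((α - 1) / 2)) * (Real.sqrt l⁻¹ * t ^ ((β - 1) / 2))
        = 2 * (Real.sqrt l * Real.sqrt l⁻¹) *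
          (t ^ ((α - 1) / 2) * t ^ ((β - 1) / 2)) := by ring
      _ = 2 * t ^ ((α + β) / 2 - 1) := by rw [hsl, e1]; ring
  linarith [h, r0.symm.le, r1.le, r2.le]

lemma cs_lemma (α β x y : ℝ) (hα : 0 < α) (hβ : 0 < β) (hx0 : 0 < x) (hxy : x < y) :
    (y ^ ((α + β) / 2) - x ^ ((α + β) / 2)) / ((α + β) / 2) *
        ((y ^ ((α + β) / 2) - x ^ ((α + β) / 2)) / ((α + β) / 2)) ≤
      (y ^ α - x ^ α) / α * ((y ^ β - x ^ β) / β) := by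
  have hγ0 : 0 < (α + β) / 2 := by linarith
  have hAv : (∫ t in x..y, t ^ (α - 1)) = (y ^ α - x ^ α) / α := by
    rw [integral_rpow (Or.inl (by linarith))]; norm_num
  have hBv : (∫ t in x..y, t ^ (β - 1)) = (y ^ β - x ^ β) / β := by
    rw [integral_rpow (Or.inl (by linarith))]; norm_num
  have hCv : (∫ t in x..y, t ^ ((α + β) / 2 - 1))
      = (y ^ ((α + β) / 2) - x ^ ((α + β) / 2)) / ((α + β) / 2) := by
    rw [integral_rpow (Or.inl (by linarith))]; norm_num
  have hA0 : 0 < (y ^ α - x ^ α) / α :=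
    div_pos (sub_pos.2 (Real.rpow_lt_rpow hx0.le hxy hα)) hα
  have hB0 : 0 < (y ^ β - x ^ β) / β :=
    div_pos (sub_pos.2 (Real.rpow_lt_rpow hx0.le hxy hβ)) hβ
  have hC0 : 0 ≤ (y ^ ((α + β) / 2) - x ^ ((α + β) / 2)) / ((α + β) / 2) :=
    le_of_lt (div_pos (sub_pos.2 (Real.rpow_lt_rpow hx0.le hxy hγ0)) hγ0)
  set P := (y ^ α - x ^ α) / α with hP
  set Q := (y ^ β - x ^ β) / β with hQ
  set D := (y ^ ((α + β) / 2) - x ^ ((α + β) / 2)) / ((α + β) / 2) with hD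
  set l := Real.sqrt Q / Real.sqrt P with hlx
  have hl : 0 < l := by positivity
  have intα := rpow_intInt hx0 hxy.le (α - 1)
  have intβ := rpow_intInt hx0 hxy.le (β - 1)
  have intγ := rpow_intInt hx0 hxy.le ((α + β) / 2 - 1)
  have mono : (∫ t in x..y, 2 * t ^ ((α + β) / 2 - 1)) ≤
      ∫ t in x..y, (l * t ^ (α - 1) + l⁻¹ * t ^ (β - 1)) := by
    apply intervalIntegral.integral_mono_on hxy.le (intγ.const_mul 2)
      ((intα.const_mul l).add (intβ.const_mul l⁻¹))
    intro t ht
    exact ptwise (lt_of_lt_of_le hx0 ht.1) hl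
  rw [intervalIntegral.integral_const_mul, intervalIntegral.integral_add
    (intα.const_mul l) (intβ.const_mul l⁻¹), intervalIntegral.integral_const_mul,
    intervalIntegral.integral_const_mul, hAv, hBv, hCv] at mono
  have sP : Real.sqrt P * Real.sqrt P = P := Real.mul_self_sqrt hA0.le
  have sQ : Real.sqrt Q * Real.sqrt Q = Q := Real.mul_self_sqrt hB0.le
  have hsP0 : 0 < Real.sqrt P := Real.sqrt_pos.2 hA0
  have hsQ0 : 0 < Real.sqrt Q := Real.sqrt_pos.2 hB0
  have e1 : l * P = Real.sqrt P * Real.sqrt Q := by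
    rw [hlx]; field_simp; nlinarith [sP]
  have e2 : l⁻¹ * Q = Real.sqrt P * Real.sqrt Q := by
    rw [hlx]; field_simp; nlinarith [sQ]
  have hDle : D ≤ Real.sqrt P * Real.sqrt Q := by linarith [mono, e1.le, e2.le]
  calc D * D ≤ Real.sqrt P * Real.sqrt Q * (Real.sqrt P * Real.sqrt Q) :=
        mul_le_mul hDle hDle hC0 (by positivity)
    _ = P * Q := by
        rw [show Real.sqrt P * Real.sqrt Q * (Real.sqrt P * Real.sqrt Q)
          = Real.sqrt P * Real.sqrt P * (Real.sqrt Q * Real.sqrt Q) by ring, sP, sQ]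

lemma final_algebra (α β P Q D : ℝ) (hα : 0 < α) (hβ : 0 < β)
    (h : D / ((α + β) / 2) * (D / ((α + β) / 2)) ≤ P / α * (Q / β)) :
    4 * α * β / (α + β) ^ 2 * D ^ 2 ≤ P * Q := by
  have hab : 0 < α + β := by linarith
  rw [div_mul_eq_mul_div, div_le_iff₀ (by positivity)]
  have h2 := mul_le_mul_of_nonneg_left h
    (by positivity : (0:ℝ) ≤ α * β * ((α + β) / 2) * ((α + β) / 2))
  have eL : α * β * ((α + β) / 2) * ((α + β) / 2) * (D / ((α + β) / 2) * (D / ((α + β) / 2)))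
      = α * β * D ^ 2 := by field_simp
  have eR : α * β * ((α + β) / 2) * ((α + β) / 2) * (P / α * (Q / β))
      = (α + β) / 2 * ((α + β) / 2) * (P * Q) := by field_simp
  rw [eL, eR] at h2
  nlinarith [h2]

theorem stmt_3 (α β : ℝ) (hα : 0 < α) (hβ : 0 < β) (x y : ℝ) (hx : 0 ≤ x) (hy : 0 ≤ y) :
    4 * α * β / (α + β) ^ 2 * (y ^ ((α + β) / 2) - x ^ ((α + β) / 2)) ^ 2 ≤
      (y ^ α - x ^ α) * (y ^ β - x ^ β) := by
  wlog hxy : x ≤ y with H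
  · have h := H α β hα hβ y x hy hx (le_of_not_ge hxy)
    have e1 : (x ^ ((α + β) / 2) - y ^ ((α + β) / 2)) ^ 2
        = (y ^ ((α + β) / 2) - x ^ ((α + β) / 2)) ^ 2 := by ring
    have e2 : (x ^ α - y ^ α) * (x ^ β - y ^ β)
        = (y ^ α - x ^ α) * (y ^ β - x ^ β) := by ring
    rw [e1, e2] at h
    exact h
  rcases eq_or_lt_of_le hxy with rfl | hlt
  · simp
  rcases hx.eq_or_lt with rfl | hx0
  · -- x = 0
    have hγ0 : 0 < (α + β) / 2 := by linarith
    rw [Real.zero_rpow hα.ne', Real.zero_rpow hβ.ne', Real.zero_rpow hγ0.ne']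
    have hy0 : 0 < y := hlt
    have e : (y ^ α - 0) * (y ^ β - 0) = (y ^ ((α + β) / 2) - 0) ^ 2 := by
      rw [sub_zero, sub_zero, sub_zero, ← Real.rpow_add hy0, pow_two,
        ← Real.rpow_add hy0]
      ring_nf
    rw [e]
    have h1 : 4 * α * β / (α + β) ^ 2 ≤ 1 := by
      rw [div_le_one (by positivity)]
      nlinarith [sq_nonneg (α - β)]
    nlinarith [sq_nonneg (y ^ ((α + β) / 2) - 0), h1]
  · exact final_algebra α β _ _ _ hα hβ (cs_lemma α β x y hα hβ hx0 hlt)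
end

section
/- Let α, β > 0. Then for all x, y ≥ 0, (y^β - x^β)(y^α - x^α) ≥ (4αβ/(α+1)^2) * min(x^(β-1), y^(β-1)) * (y^((α+1)/2) - x^((α+1)/2))^2. -/
open MeasureTheory Set

private lemma cs_step {α x y : ℝ} (hα : 0 < α) (hx : 0 < x) (hxy : x ≤ y) :
    α * (y ^ ((α + 1) / 2) - x ^ ((α + 1) / 2)) ^ 2 ≤
      ((α + 1) / 2) ^ 2 * ((y - x) * (y ^ α - x ^ α)) := by
  set r : ℝ := (α - 1) / 2 with hr
  set μ := volume.restrict (Ioc x y) with hμ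
  haveI : IsFiniteMeasure μ := ⟨by
    rw [hμ, Measure.restrict_apply_univ]; exact measure_Ioc_lt_top⟩
  have hpq : (2:ℝ).HolderConjugate 2 := ⟨by norm_num, by norm_num, by norm_num⟩
  have hmeas : AEStronglyMeasurable (fun t : ℝ => t ^ r) μ := by
    rw [hμ]
    exact ContinuousOn.aestronglyMeasurable
      (fun a ha => (Real.continuousAt_rpow_const a r
        (Or.inl (lt_trans hx ha.1).ne')).continuousWithinAt) measurableSet_Ioc
  have hbdd : ∀ᵐ a ∂μ, ‖a ^ r‖ ≤ x ^ r + y ^ r := by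
    rw [hμ, ae_restrict_iff' measurableSet_Ioc]
    refine ae_of_all _ fun a ha => ?_
    have ha0 : 0 < a := lt_trans hx ha.1
    rw [Real.norm_of_nonneg (Real.rpow_nonneg ha0.le r)]
    have hxr : 0 ≤ x ^ r := Real.rpow_nonneg hx.le r
    have hyr : 0 ≤ y ^ r := Real.rpow_nonneg (hx.trans_le hxy).le r
    rcases le_or_gt 0 r with h | h
    · have := Real.rpow_le_rpow ha0.le ha.2 h
      linarith
    · have := Real.rpow_le_rpow_of_nonpos hx ha.1.le h.le
      linarith
  have hf : MemLp (fun t : ℝ => t ^ r) (ENNReal.ofReal 2) μ :=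
    MemLp.of_bound hmeas _ hbdd
  have hg : MemLp (fun _ : ℝ => (1:ℝ)) (ENNReal.ofReal 2) μ := memLp_const 1
  have hfnn : 0 ≤ᵐ[μ] fun t : ℝ => t ^ r := by
    rw [hμ, Filter.EventuallyLE, ae_restrict_iff' measurableSet_Ioc]
    exact ae_of_all _ fun a ha => Real.rpow_nonneg (lt_trans hx ha.1).le r
  have key := integral_mul_le_Lp_mul_Lq_of_nonneg hpq hfnn
    (ae_of_all _ fun _ => zero_le_one) hf hg
  have hγ : r + 1 = (α + 1) / 2 := by rw [hr]; ring
  have hγpos : (0:ℝ) < (α + 1) / 2 := by linarith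
  have I1 : ∫ a, a ^ r * 1 ∂μ = (y ^ ((α+1)/2) - x ^ ((α+1)/2)) / ((α+1)/2) := by
    simp only [mul_one]
    rw [hμ, ← intervalIntegral.integral_of_le hxy,
      integral_rpow (Or.inl (by rw [hr]; linarith)), hγ]
  have I2 : ∫ a, (a ^ r) ^ (2:ℝ) ∂μ = (y ^ α - x ^ α) / α := by
    rw [hμ, setIntegral_congr_fun measurableSet_Ioc
      (g := fun a : ℝ => a ^ (α - 1)) (fun a ha => ?_)]
    · rw [← intervalIntegral.integral_of_le hxy,
        integral_rpow (Or.inl (by linarith)), sub_add_cancel]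
    · have ha0 : (0:ℝ) ≤ a := (lt_trans hx ha.1).le
      rw [← Real.rpow_mul ha0]
      norm_num [hr]
  have I3 : ∫ _, ((1:ℝ)) ^ (2:ℝ) ∂μ = y - x := by
    rw [Real.one_rpow, hμ]
    simp [Real.volume_Ioc, ENNReal.toReal_ofReal (sub_nonneg.2 hxy), hxy]
  rw [I1] at key
  rw [I2, I3] at key
  have hAnn : 0 ≤ (y ^ α - x ^ α) / α := by
    have := Real.rpow_le_rpow hx.le hxy hα.le
    exact div_nonneg (by linarith) hα.le
  have hBnn : (0:ℝ) ≤ y - x := sub_nonneg.2 hxy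
  have hLnn : 0 ≤ (y ^ ((α+1)/2) - x ^ ((α+1)/2)) / ((α+1)/2) := by
    have := Real.rpow_le_rpow hx.le hxy hγpos.le
    have h2 : 0 ≤ y ^ ((α+1)/2) - x ^ ((α+1)/2) := by linarith
    exact div_nonneg h2 hγpos.le
  have hRnn : 0 ≤ ((y ^ α - x ^ α) / α) ^ (1/(2:ℝ)) * (y - x) ^ (1/(2:ℝ)) := by
    positivity
  have hsq := mul_le_mul key key hLnn hRnn
  have hhalf : ((y ^ α - x ^ α) / α) ^ (1/(2:ℝ)) * (y - x) ^ (1/(2:ℝ)) *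
      (((y ^ α - x ^ α) / α) ^ (1/(2:ℝ)) * (y - x) ^ (1/(2:ℝ))) =
      ((y ^ α - x ^ α) / α) * (y - x) := by
    rw [show ((y ^ α - x ^ α) / α) ^ (1/(2:ℝ)) * (y - x) ^ (1/(2:ℝ)) *
        (((y ^ α - x ^ α) / α) ^ (1/(2:ℝ)) * (y - x) ^ (1/(2:ℝ))) =
        (((y ^ α - x ^ α) / α) ^ (1/(2:ℝ)) * ((y ^ α - x ^ α) / α) ^ (1/(2:ℝ))) *
        ((y - x) ^ (1/(2:ℝ)) * (y - x) ^ (1/(2:ℝ))) by ring,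
      ← Real.rpow_add_of_nonneg hAnn (by norm_num) (by norm_num),
      ← Real.rpow_add_of_nonneg hBnn (by norm_num) (by norm_num)]
    norm_num
  rw [hhalf] at hsq
  -- hsq : (L)^2-ish ≤ A * B
  have hαne : α ≠ 0 := ne_of_gt hα
  have hγne : ((α:ℝ) + 1) / 2 ≠ 0 := ne_of_gt hγpos
  have expand : (y ^ ((α+1)/2) - x ^ ((α+1)/2)) / ((α+1)/2) *
      ((y ^ ((α+1)/2) - x ^ ((α+1)/2)) / ((α+1)/2)) =
      (y ^ ((α+1)/2) - x ^ ((α+1)/2)) ^ 2 / ((α+1)/2) ^ 2 := by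
    field_simp
  rw [expand] at hsq
  rw [div_le_iff₀ (by positivity : (0:ℝ) < ((α+1)/2)^2)] at hsq
  calc α * (y ^ ((α + 1) / 2) - x ^ ((α + 1) / 2)) ^ 2
      ≤ α * ((y ^ α - x ^ α) / α * (y - x) * ((α+1)/2)^2) :=
        mul_le_mul_of_nonneg_left hsq hα.le
    _ = ((α + 1) / 2) ^ 2 * ((y - x) * (y ^ α - x ^ α)) := by
        field_simp

private lemma mvt_step {β x y : ℝ} (hβ : 0 < β) (hx : 0 < x) (hy : 0 < y) (hxy : x ≤ y) :
    β * min (x ^ (β - 1)) (y ^ (β - 1)) * (y - x) ≤ y ^ β - x ^ β := by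
  rcases le_or_gt 1 β with h1 | h1
  · have hmin : min (x ^ (β-1)) (y ^ (β-1)) = x ^ (β-1) :=
      min_eq_left (Real.rpow_le_rpow hx.le hxy (by linarith))
    rw [hmin]
    have hs : -1 ≤ y / x - 1 := by
      have : 0 ≤ y / x := by positivity
      linarith
    have hb := one_add_mul_self_le_rpow_one_add hs h1
    rw [show (1 + (y/x - 1)) = y/x by ring] at hb
    have hxβ : (0:ℝ) < x ^ β := Real.rpow_pos_of_pos hx β
    have hb2 := mul_le_mul_of_nonneg_left hb hxβ.le
    have hpow : x ^ β * (y/x) ^ β = y ^ β := by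
      rw [← Real.mul_rpow hx.le (by positivity), mul_div_cancel₀ _ (ne_of_gt hx)]
    have hxb1 : x ^ (β - 1) = x ^ β / x := by
      rw [Real.rpow_sub hx, Real.rpow_one]
    have keyeq : x ^ β * (1 + β * (y/x - 1)) = x ^ β + β * (x ^ β / x) * (y - x) := by
      field_simp
    rw [hxb1]
    rw [keyeq, hpow] at hb2
    linarith
  · have hmin : min (x ^ (β-1)) (y ^ (β-1)) = y ^ (β-1) :=
      min_eq_right (Real.rpow_le_rpow_of_nonpos hx hxy (by linarith))
    rw [hmin]
    have hs : -1 ≤ x / y - 1 := by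
      have : 0 ≤ x / y := by positivity
      linarith
    have hb := rpow_one_add_le_one_add_mul_self hs hβ.le h1.le
    rw [show (1 + (x/y - 1)) = x/y by ring] at hb
    have hyβ : (0:ℝ) < y ^ β := Real.rpow_pos_of_pos hy β
    have hb2 := mul_le_mul_of_nonneg_left hb hyβ.le
    have hpow : y ^ β * (x/y) ^ β = x ^ β := by
      rw [← Real.mul_rpow hy.le (by positivity), mul_div_cancel₀ _ (ne_of_gt hy)]
    have hyb1 : y ^ (β - 1) = y ^ β / y := by
      rw [Real.rpow_sub hy, Real.rpow_one]
    have keyeq : y ^ β * (1 + β * (x/y - 1)) = y ^ β + β * (y ^ β / y) * (x - y) := by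
      field_simp
    rw [hyb1]
    rw [hpow, keyeq] at hb2
    linarith

private lemma main_le (α β : ℝ) (hα : 0 < α) (hβ : 0 < β) (x y : ℝ) (hx : 0 < x)
    (hy : 0 < y) (hxy : x ≤ y) :
    4 * α * β / (α + 1) ^ 2 * min (x ^ (β - 1)) (y ^ (β - 1)) *
        (y ^ ((α + 1) / 2) - x ^ ((α + 1) / 2)) ^ 2 ≤
      (y ^ β - x ^ β) * (y ^ α - x ^ α) := by
  set m := min (x ^ (β - 1)) (y ^ (β - 1)) with hm
  have hmnn : 0 ≤ m := le_min (Real.rpow_nonneg hx.le _) (Real.rpow_nonneg hy.le _)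
  have hcs := cs_step hα hx hxy
  have hmvt := mvt_step hβ hx hy hxy
  have hαx : 0 ≤ y ^ α - x ^ α := sub_nonneg.2 (Real.rpow_le_rpow hx.le hxy hα.le)
  have hα1 : (0:ℝ) < (α + 1) ^ 2 := by positivity
  set S := (y ^ ((α + 1) / 2) - x ^ ((α + 1) / 2)) ^ 2 with hS
  have hstep1 : 4 * α * β / (α + 1) ^ 2 * m * S ≤ β * m * ((y - x) * (y ^ α - x ^ α)) := by
    have h1 : 4 * α * β / (α + 1) ^ 2 * m * S =
        (4 * β / (α + 1) ^ 2 * m) * (α * S) := by ring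
    have h2 : (4 * β / (α + 1) ^ 2 * m) * (((α + 1) / 2) ^ 2 * ((y - x) * (y ^ α - x ^ α))) =
        β * m * ((y - x) * (y ^ α - x ^ α)) := by
      field_simp
      ring
    rw [h1, ← h2]
    exact mul_le_mul_of_nonneg_left hcs (by positivity)
  have hstep2 : β * m * ((y - x) * (y ^ α - x ^ α)) ≤ (y ^ β - x ^ β) * (y ^ α - x ^ α) := by
    have := mul_le_mul_of_nonneg_right hmvt hαx
    calc β * m * ((y - x) * (y ^ α - x ^ α)) = β * m * (y - x) * (y ^ α - x ^ α) := by ring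
      _ ≤ (y ^ β - x ^ β) * (y ^ α - x ^ α) := this
  linarith

theorem stmt_4 (α β : ℝ) (hα : 0 < α) (hβ : 0 < β) (x y : ℝ) (hx : 0 < x) (hy : 0 < y) :
    4 * α * β / (α + 1) ^ 2 * min (x ^ (β - 1)) (y ^ (β - 1)) *
        (y ^ ((α + 1) / 2) - x ^ ((α + 1) / 2)) ^ 2 ≤
      (y ^ β - x ^ β) * (y ^ α - x ^ α) := by
  rcases le_total x y with h | h
  · exact main_le α β hα hβ x y hx hy h
  · have H := main_le α β hα hβ y x hy hx h
    rw [min_comm] at H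
    have e1 : (x ^ ((α + 1) / 2) - y ^ ((α + 1) / 2)) ^ 2 =
        (y ^ ((α + 1) / 2) - x ^ ((α + 1) / 2)) ^ 2 := by ring
    have e2 : (x ^ β - y ^ β) * (x ^ α - y ^ α) =
        (y ^ β - x ^ β) * (y ^ α - x ^ α) := by ring
    rw [e1, e2] at H
    exact H
end

section
/- Let τ > 0, γ > 1, and let (x_n) be a sequence of nonnegative reals with x_0 > 0 satisfying x_{n+1} - x_n + τ x_{n+1}^γ ≤ 0 for all n. Then x_n ≤ (x_0^(1-γ) + c τ n)^(-1/(γ-1)) for all n, where c = (γ-1)/(1 + γ τ x_0^(γ-1)). -/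
theorem stmt_7 (τ γ : ℝ) (hτ : 0 < τ) (hγ : 1 < γ) (x : ℕ → ℝ)
    (hx0 : 0 < x 0) (hxnn : ∀ n, 0 ≤ x n)
    (hrec : ∀ n : ℕ, x (n + 1) - x n + τ * x (n + 1) ^ γ ≤ 0) :
    ∀ n : ℕ,
      x n ≤ (x 0 ^ (1 - γ) + (γ - 1) / (1 + γ * τ * x 0 ^ (γ - 1)) * τ * n) ^ (-(1 / (γ - 1))) := by
  have hγ1 : (0:ℝ) < γ - 1 := by linarith
  set M : ℝ := τ * x 0 ^ (γ - 1) with hM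
  have hMpos : 0 < M := mul_pos hτ (Real.rpow_pos_of_pos hx0 _)
  set c : ℝ := (γ - 1) / (1 + γ * M) with hc
  have hden : (0:ℝ) < 1 + γ * M := by nlinarith
  have hcpos : 0 < c := div_pos hγ1 hden
  -- monotonicity
  have hmono : ∀ n, x (n + 1) ≤ x n := by
    intro n
    have h1 := hrec n
    have h2 : 0 ≤ τ * x (n + 1) ^ γ :=
      mul_nonneg hτ.le (Real.rpow_nonneg (hxnn _) _)
    linarith
  have hle0 : ∀ n, x n ≤ x 0 := by
    intro n
    induction n with
    | zero => exact le_refl _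
    | succ k ih => exact (hmono k).trans ih
  -- key step
  have key : ∀ n, 0 < x (n + 1) →
      x n ^ (1 - γ) + c * τ ≤ x (n + 1) ^ (1 - γ) := by
    intro n hb
    set a := x n
    set b := x (n + 1)
    have hba : b ≤ a := hmono n
    have ha : 0 < a := lt_of_lt_of_le hb hba
    have hbx0 : b ≤ x 0 := (hba.trans (hle0 n))
    have hrec' : b + τ * b ^ γ ≤ a := by have := hrec n; simp only [a, b]; linarith
    set u : ℝ := τ * b ^ (γ - 1) with hu
    have hupos : 0 < u := mul_pos hτ (Real.rpow_pos_of_pos hb _)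
    have huM : u ≤ M := by
      have : b ^ (γ - 1) ≤ x 0 ^ (γ - 1) :=
        Real.rpow_le_rpow (hxnn _) hbx0 hγ1.le
      exact mul_le_mul_of_nonneg_left this hτ.le
    -- b + τ b^γ = b * (1 + u)
    have hsplit : b ^ γ = b * b ^ (γ - 1) := by
      rw [← Real.rpow_one_add' hb.le (by intro h; nlinarith)]
      congr 1; ring
    have hfac : b + τ * b ^ γ = b * (1 + u) := by
      rw [hsplit, hu]; ring
    have h1u : (0:ℝ) < 1 + u := by linarith
    -- a^(1-γ) ≤ (b*(1+u))^(1-γ)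
    have step1 : a ^ (1 - γ) ≤ (b * (1 + u)) ^ (1 - γ) := by
      apply Real.rpow_le_rpow_of_nonpos (by positivity) (by rw [← hfac]; exact hrec')
      linarith
    have hmulpow : (b * (1 + u)) ^ (1 - γ) = b ^ (1 - γ) * (1 + u) ^ (1 - γ) :=
      Real.mul_rpow hb.le h1u.le
    -- Bernoulli: (1+u)^γ ≥ 1 + γ u
    have bern : 1 + γ * u ≤ (1 + u) ^ γ := by
      have := one_add_mul_self_le_rpow_one_add (s := u) (by linarith) hγ.le
      linarith [this]
    have hpow1 : (1 + u) ^ γ = (1 + u) * (1 + u) ^ (γ - 1) := by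
      rw [← Real.rpow_one_add' h1u.le (by intro h; nlinarith)]; congr 1; ring
    have hγu : (0:ℝ) < 1 + γ * u := by nlinarith
    have hpowm1 : (0:ℝ) < (1 + u) ^ (γ - 1) := Real.rpow_pos_of_pos h1u _
    -- (1+u)^(γ-1) ≥ (1+γu)/(1+u)
    have step2 : (1 + γ * u) / (1 + u) ≤ (1 + u) ^ (γ - 1) := by
      rw [div_le_iff₀ h1u]
      calc (1 + γ * u) ≤ (1 + u) ^ γ := bern
        _ = (1 + u) ^ (γ - 1) * (1 + u) := by rw [hpow1]; ring
    -- (1+u)^(1-γ) ≤ (1+u)/(1+γu)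
    have hinv : (1 + u) ^ (1 - γ) = ((1 + u) ^ (γ - 1))⁻¹ := by
      rw [← Real.rpow_neg h1u.le]; ring_nf
    have step3 : (1 + u) ^ (1 - γ) ≤ (1 + u) / (1 + γ * u) := by
      rw [hinv]
      rw [inv_le_iff_one_le_mul₀ hpowm1]  -- may not exist; fallback below
      calc (1:ℝ) = ((1 + γ * u) / (1 + u)) * ((1 + u) / (1 + γ * u)) := by
            field_simp
        _ ≤ (1 + u) ^ (γ - 1) * ((1 + u) / (1 + γ * u)) := by
            apply mul_le_mul_of_nonneg_right step2; positivity
        _ = (1 + u) / (1 + γ * u) * (1 + u) ^ (γ - 1) := by ring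
    -- 1 - (1+u)^(1-γ) ≥ (γ-1)u/(1+γu) ≥ c u
    have step4 : c * u ≤ 1 - (1 + u) ^ (1 - γ) := by
      have h1 : 1 - (1 + u) / (1 + γ * u) = (γ - 1) * u / (1 + γ * u) := by
        field_simp; ring
      have h2 : c * u ≤ (γ - 1) * u / (1 + γ * u) := by
        rw [hc, div_mul_eq_mul_div, div_le_div_iff₀ hden hγu]
        have : (γ - 1) * u * (1 + γ * u) ≤ (γ - 1) * u * (1 + γ * M) := by
          apply mul_le_mul_of_nonneg_left _ (by positivity)
          nlinarith
        linarith
      linarith [step3, h1 ▸ h2, h2]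
    -- combine
    have hbneg : (0:ℝ) < b ^ (1 - γ) := Real.rpow_pos_of_pos hb _
    have hprod : b ^ (1 - γ) * u = τ := by
      rw [hu, ← mul_assoc, mul_comm (b ^ (1-γ)) τ, mul_assoc,
        ← Real.rpow_add hb]
      norm_num
    have : b ^ (1 - γ) * (c * u) ≤ b ^ (1 - γ) * (1 - (1 + u) ^ (1 - γ)) :=
      mul_le_mul_of_nonneg_left step4 hbneg.le
    have hfin : c * τ ≤ b ^ (1 - γ) - b ^ (1 - γ) * (1 + u) ^ (1 - γ) := by
      calc c * τ = c * (b ^ (1 - γ) * u) := by rw [hprod]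
        _ = b ^ (1 - γ) * (c * u) := by ring
        _ ≤ b ^ (1 - γ) * (1 - (1 + u) ^ (1 - γ)) := this
        _ = b ^ (1 - γ) - b ^ (1 - γ) * (1 + u) ^ (1 - γ) := by ring
    have := step1.trans_eq hmulpow
    linarith
  -- induction: positive case
  have main : ∀ n, 0 < x n → x 0 ^ (1 - γ) + c * τ * n ≤ x n ^ (1 - γ) := by
    intro n
    induction n with
    | zero => intro _; simp
    | succ k ih =>
      intro hpos
      have hxk : 0 < x k := lt_of_lt_of_le hpos (hmono k)
      have := key k hpos
      have := ih hxk
      push_cast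
      nlinarith
  intro n
  set y : ℝ := x 0 ^ (1 - γ) + c * τ * n with hy
  have hypos : 0 < y := by
    have : (0:ℝ) < x 0 ^ (1 - γ) := Real.rpow_pos_of_pos hx0 _
    have : (0:ℝ) ≤ c * τ * n := by positivity
    simp only [hy]; linarith [Real.rpow_pos_of_pos hx0 (1 - γ)]
  rw [show (x 0 ^ (1 - γ) + (γ - 1) / (1 + γ * τ * x 0 ^ (γ - 1)) * τ * (n:ℝ)) = y from by
    rw [hy, hc, hM]; ring]
  rcases eq_or_lt_of_le (hxnn n) with h0 | hpos
  · rw [← h0]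
    exact (Real.rpow_pos_of_pos hypos _).le
  · have hmn := main n hpos
    have hneg : -(1 / (γ - 1)) < 0 := by
      have : (0:ℝ) < 1 / (γ - 1) := by positivity
      linarith
    have hle := Real.rpow_le_rpow_of_nonpos hypos hmn hneg.le
    have hid : (x n ^ (1 - γ)) ^ (-(1 / (γ - 1))) = x n := by
      rw [← Real.rpow_mul (hxnn n)]
      have h1 : (1 - γ) * -(1 / (γ - 1)) = 1 := by field_simp; ring
      rw [h1, Real.rpow_one]
    calc x n = (x n ^ (1 - γ)) ^ (-(1 / (γ - 1))) := hid.symm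
      _ ≤ y ^ (-(1 / (γ - 1))) := hle
end

section
/- Let μ be a probability measure on a measurable space, f a nonnegative measurable function with 0 < ∫ f^q dμ < ∞ for all exponents involved, and 0 < q < 2. Then ∫ f^q log( f^q / ∫ f^q dμ ) dμ ≤ (q/(2-q)) (∫ f^q dμ) log( ∫ f² dμ / (∫ f^q dμ)^(2/q) ). -/
open MeasureTheory

theorem stmt_10 {Ω : Type*} [MeasurableSpace Ω] (μ : Measure Ω) [IsProbabilityMeasure μ]
    (f : Ω → ℝ) (hf : Measurable f) (hfnn : ∀ x, 0 ≤ f x)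
    (q : ℝ) (hq0 : 0 < q) (hq2 : q < 2)
    (hq_int : Integrable (fun x => f x ^ q) μ)
    (h2_int : Integrable (fun x => f x ^ (2:ℝ)) μ)
    (hlog_int : Integrable (fun x => f x ^ q * Real.log (f x)) μ)
    (hq_pos : 0 < ∫ x, f x ^ q ∂μ)
    (h2_pos : 0 < ∫ x, f x ^ (2:ℝ) ∂μ) :
    ∫ x, f x ^ q * Real.log (f x ^ q / ∫ y, f y ^ q ∂μ) ∂μ ≤
      q / (2 - q) * (∫ x, f x ^ q ∂μ) *
        Real.log ((∫ x, f x ^ (2:ℝ) ∂μ) / (∫ x, f x ^ q ∂μ) ^ (2 / q)) := by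
  set A := ∫ x, f x ^ q ∂μ with hA
  set B := ∫ x, f x ^ (2:ℝ) ∂μ with hB
  have h2q : (0:ℝ) < 2 - q := by linarith
  -- Step 1: rewrite LHS
  have hpt1 : ∀ x, f x ^ q * Real.log (f x ^ q / A) =
      q * (f x ^ q * Real.log (f x)) - Real.log A * f x ^ q := by
    intro x
    rcases eq_or_lt_of_le (hfnn x) with h0 | h0
    · simp [← h0, Real.zero_rpow hq0.ne']
    · rw [Real.log_div (Real.rpow_pos_of_pos h0 q).ne' hq_pos.ne',
        Real.log_rpow h0]
      ring
  have hLHS : ∫ x, f x ^ q * Real.log (f x ^ q / A) ∂μ =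
      q * (∫ x, f x ^ q * Real.log (f x) ∂μ) - Real.log A * A := by
    simp_rw [hpt1]
    rw [integral_sub (hlog_int.const_mul q) (hq_int.const_mul (Real.log A)),
      integral_const_mul, integral_const_mul]
  -- Step 2: key inequality via log u ≤ u - 1
  have hkey : (2 - q) * ∫ x, f x ^ q * Real.log (f x) ∂μ ≤ A * Real.log (B / A) := by
    have hpt : ∀ x, (2 - q) * (f x ^ q * Real.log (f x)) ≤
        Real.log (B / A) * f x ^ q + (A / B) * f x ^ (2:ℝ) - f x ^ q := by
      intro x
      rcases eq_or_lt_of_le (hfnn x) with h0 | h0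
      · simp [← h0, Real.zero_rpow hq0.ne', Real.zero_rpow (by norm_num : (2:ℝ) ≠ 0)]
      · have hfq : (0:ℝ) < f x ^ q := Real.rpow_pos_of_pos h0 q
        have hf2q : (0:ℝ) < f x ^ (2 - q) := Real.rpow_pos_of_pos h0 (2 - q)
        have hu : (0:ℝ) < (A / B) * f x ^ (2 - q) :=
          mul_pos (div_pos hq_pos h2_pos) hf2q
        have hlog := Real.log_le_sub_one_of_pos hu
        rw [Real.log_mul (div_pos hq_pos h2_pos).ne' hf2q.ne',
          Real.log_div hq_pos.ne' h2_pos.ne', Real.log_rpow h0] at hlog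
        have h2eq : f x ^ (2:ℝ) = f x ^ q * f x ^ (2 - q) := by
          rw [← Real.rpow_add h0]; norm_num
        rw [h2eq]
        have := mul_le_mul_of_nonneg_left hlog hfq.le
        have hBA : Real.log (B / A) = Real.log B - Real.log A :=
          Real.log_div h2_pos.ne' hq_pos.ne'
        nlinarith [hfq.le]
    have hint : ∫ x, (Real.log (B / A) * f x ^ q + (A / B) * f x ^ (2:ℝ) - f x ^ q) ∂μ
        = A * Real.log (B / A) := by
      have i1 : Integrable (fun x => Real.log (B / A) * f x ^ q) μ :=
        hq_int.const_mul _
      have i2 : Integrable (fun x => (A / B) * f x ^ (2:ℝ)) μ :=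
        h2_int.const_mul _
      have i12 : Integrable (fun x => Real.log (B / A) * f x ^ q + (A / B) * f x ^ (2:ℝ)) μ :=
        i1.add i2
      rw [integral_sub i12 hq_int, integral_add i1 i2,
        integral_const_mul, integral_const_mul, ← hB]
      field_simp
      ring
    calc (2 - q) * ∫ x, f x ^ q * Real.log (f x) ∂μ
        = ∫ x, (2 - q) * (f x ^ q * Real.log (f x)) ∂μ := (integral_const_mul _ _).symm
      _ ≤ ∫ x, (Real.log (B / A) * f x ^ q + (A / B) * f x ^ (2:ℝ) - f x ^ q) ∂μ :=
          integral_mono (hlog_int.const_mul _)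
            (Integrable.sub (Integrable.add (hq_int.const_mul _) (h2_int.const_mul _))
              hq_int) hpt
      _ = A * Real.log (B / A) := hint
  -- Step 3: combine
  rw [hLHS]
  have hI : ∫ x, f x ^ q * Real.log (f x) ∂μ ≤ A * Real.log (B / A) / (2 - q) :=
    (le_div_iff₀' h2q).mpr hkey
  have hrhs : Real.log (B / A ^ (2 / q)) = Real.log B - (2 / q) * Real.log A := by
    rw [Real.log_div h2_pos.ne' (Real.rpow_pos_of_pos hq_pos _).ne',
      Real.log_rpow hq_pos]
  have hBA : Real.log (B / A) = Real.log B - Real.log A :=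
    Real.log_div h2_pos.ne' hq_pos.ne'
  have h1 : q * (∫ x, f x ^ q * Real.log (f x) ∂μ) ≤
      q * (A * Real.log (B / A) / (2 - q)) :=
    mul_le_mul_of_nonneg_left hI hq0.le
  have h2 : q * (A * Real.log (B / A) / (2 - q)) - Real.log A * A =
      q / (2 - q) * A * Real.log (B / A ^ (2 / q)) := by
    rw [hrhs, hBA]
    field_simp
    ring
  linarith
end

section
/- Let μ be a probability measure, f a nonnegative measurable function with finite positive moments, q > 0, and r ≥ 1. Then (1/(r-1)) ( ∫ f^q dμ - (∫ f^{q/r} dμ)^r ) ≤ ∫ f^q log( f^q / ∫ f^q dμ ) dμ (with the left side interpreted as the limit for r = 1). -/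
open MeasureTheory

theorem stmt_11 {Ω : Type*} [MeasurableSpace Ω] (μ : Measure Ω) [IsProbabilityMeasure μ]
    (f : Ω → ℝ) (hf : Measurable f) (hfnn : ∀ x, 0 ≤ f x)
    (q r : ℝ) (hq : 0 < q) (hr : 1 ≤ r)
    (hq_int : Integrable (fun x => f x ^ q) μ)
    (hqr_int : Integrable (fun x => f x ^ (q / r)) μ)
    (hlog_int : Integrable (fun x => f x ^ q * Real.log (f x)) μ)
    (hq_pos : 0 < ∫ x, f x ^ q ∂μ) :
    1 / (r - 1) * ((∫ x, f x ^ q ∂μ) - (∫ x, f x ^ (q / r) ∂μ) ^ r) ≤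
      ∫ x, f x ^ q * Real.log (f x ^ q / ∫ y, f y ^ q ∂μ) ∂μ := by
  have hr0 : (0:ℝ) < r := lt_of_lt_of_le one_pos hr
  have hrne : r ≠ 0 := hr0.ne'
  set I := ∫ x, f x ^ q ∂μ with hI_def
  set J := ∫ x, f x ^ (q / r) ∂μ with hJ_def
  set E : Ω → ℝ := fun x => f x ^ q * Real.log (f x ^ q / I) with hE_def
  have hEeq : ∀ x, E x = q * (f x ^ q * Real.log (f x)) - Real.log I * f x ^ q := by
    intro x
    rcases eq_or_lt_of_le (hfnn x) with h0 | hpos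
    · simp [hE_def, ← h0, Real.zero_rpow hq.ne']
    · have hfq : (0:ℝ) < f x ^ q := Real.rpow_pos_of_pos hpos q
      rw [hE_def]
      simp only
      rw [Real.log_div hfq.ne' hq_pos.ne', Real.log_rpow hpos]
      ring
  have hE_int : Integrable E μ := by
    apply ((hlog_int.const_mul q).sub (hq_int.const_mul (Real.log I))).congr
    exact Filter.Eventually.of_forall fun x => (hEeq x).symm
  -- pointwise lower bound: f x ^ q - I ≤ E x
  have hlow : ∀ x, f x ^ q - I ≤ E x := by
    intro x
    rcases eq_or_lt_of_le (hfnn x) with h0 | hpos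
    · simp [hE_def, ← h0, Real.zero_rpow hq.ne', le_of_lt hq_pos]
    · have hfq : (0:ℝ) < f x ^ q := Real.rpow_pos_of_pos hpos q
      have h1 : 1 - I / f x ^ q ≤ Real.log (f x ^ q / I) := by
        have h2 := Real.log_le_sub_one_of_pos (show 0 < I / f x ^ q from div_pos hq_pos hfq)
        have hli : Real.log (I / f x ^ q) = - Real.log (f x ^ q / I) := by
          rw [← Real.log_inv, inv_div]
        linarith
      have h3 := mul_le_mul_of_nonneg_left h1 hfq.le
      have h4 : f x ^ q * (1 - I / f x ^ q) = f x ^ q - I := by field_simp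
      simpa [hE_def, h4] using h3
  have h0le : (0:ℝ) ≤ ∫ x, E x ∂μ := by
    have h := integral_mono (hq_int.sub (integrable_const I)) hE_int hlow
    simp only [Pi.sub_apply] at h
    rw [integral_sub hq_int (integrable_const I), integral_const] at h
    simp only [measure_univ, probReal_univ, ENNReal.toReal_one, one_smul] at h
    linarith
  rcases hr.eq_or_lt with hr1 | hr1
  · -- r = 1
    subst hr1
    simpa using h0le
  · -- r > 1
    have hs1 : 1 / r ≤ 1 := by rw [div_le_one hr0]; exact hr
    -- pointwise: f x ^ q - I^(1-1/r) * f x ^ (q/r) ≤ (1 - 1/r) * E x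
    have hptB : ∀ x, f x ^ q - I ^ (1 - 1/r) * f x ^ (q/r) ≤ (1 - 1/r) * E x := by
      intro x
      rcases eq_or_lt_of_le (hfnn x) with h0 | hpos
      · simp [hE_def, ← h0, Real.zero_rpow hq.ne',
          Real.zero_rpow (show q / r ≠ 0 by positivity)]
      · have ha : (0:ℝ) < f x ^ q := Real.rpow_pos_of_pos hpos q
        have haqr : f x ^ (q/r) = (f x ^ q) ^ (1/r) := by
          rw [← Real.rpow_mul (hfnn x)]
          congr 1
          field_simp
        set a := f x ^ q with hadef
        have hEx : E x = a * (Real.log a - Real.log I) := by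
          rw [hE_def]
          simp only
          rw [Real.log_div ha.ne' hq_pos.ne']
        have e1 : I ^ (1 - 1/r) * a ^ (1/r)
            = a * Real.exp ((1 - 1/r) * (Real.log I - Real.log a)) := by
          rw [Real.rpow_def_of_pos hq_pos, Real.rpow_def_of_pos ha, ← Real.exp_add]
          nth_rewrite 2 [show a = Real.exp (Real.log a) from (Real.exp_log ha).symm]
          rw [← Real.exp_add]
          congr 1
          ring
        have h2 : 1 + (1 - 1/r) * (Real.log I - Real.log a)
            ≤ Real.exp ((1 - 1/r) * (Real.log I - Real.log a)) := by
          linarith [Real.add_one_le_exp ((1 - 1/r) * (Real.log I - Real.log a))]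
        have h3 : a * (1 + (1 - 1/r) * (Real.log I - Real.log a))
            ≤ I ^ (1 - 1/r) * a ^ (1/r) := by
          rw [e1]; exact mul_le_mul_of_nonneg_left h2 ha.le
        rw [haqr, hEx]
        nlinarith [h3]
    have hstep1 : I - I ^ (1 - 1/r) * J ≤ (1 - 1/r) * ∫ x, E x ∂μ := by
      have h := integral_mono (hq_int.sub (hqr_int.const_mul (I ^ (1 - 1/r))))
        (hE_int.const_mul (1 - 1/r)) hptB
      simp only [Pi.sub_apply] at h
      rwa [integral_sub hq_int (hqr_int.const_mul _), integral_const_mul,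
        integral_const_mul] at h
    have hJ0 : 0 ≤ J := integral_nonneg fun x => Real.rpow_nonneg (hfnn x) _
    set c := I ^ (1/r) with hcdef
    have hc : 0 < c := Real.rpow_pos_of_pos hq_pos _
    set t := J / c with htdef
    have ht0 : 0 ≤ t := div_nonneg hJ0 hc.le
    have hJt : J = c * t := by rw [htdef]; field_simp
    have e2 : J ^ r = I * t ^ r := by
      rw [hJt, Real.mul_rpow hc.le ht0, hcdef, ← Real.rpow_mul hq_pos.le,
        one_div_mul_cancel hrne, Real.rpow_one]
    have e3 : I ^ (1 - 1/r) * J = I * t := by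
      rw [hJt, ← mul_assoc, hcdef, ← Real.rpow_add hq_pos]
      norm_num
    have hbern : 1 + r * (t - 1) ≤ t ^ r := by
      have h := one_add_mul_self_le_rpow_one_add (show (-1:ℝ) ≤ t - 1 by linarith) hr
      simpa using h
    have hstep2 : I - J ^ r ≤ r * (I - I ^ (1 - 1/r) * J) := by
      rw [e2, e3]
      nlinarith [mul_le_mul_of_nonneg_left hbern hq_pos.le]
    rw [one_div, inv_mul_le_iff₀ (by linarith : (0:ℝ) < r - 1)]
    have hfld : r * (1 - 1/r) = r - 1 := by field_simp
    calc I - J ^ r ≤ r * (I - I ^ (1 - 1/r) * J) := hstep2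
      _ ≤ r * ((1 - 1/r) * ∫ x, E x ∂μ) := mul_le_mul_of_nonneg_left hstep1 hr0.le
      _ = (r - 1) * ∫ x, E x ∂μ := by rw [← mul_assoc, hfld]
end

section
/- Let μ be a probability measure and f a nonnegative measurable function with finite positive q-th moments. Then the function G(r) = r log ∫ f^{q/r} dμ is convex on (0, ∞). -/
open MeasureTheory

private lemma memLp_aux {Ω : Type*} [MeasurableSpace Ω] (μ : Measure Ω)
    (f : Ω → ℝ) (hf : Measurable f) (hfnn : ∀ x, 0 ≤ f x) {s a : ℝ} (hs : 0 < s) (ha : 0 < a)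
    (hint : Integrable (fun x => f x ^ s) μ) :
    MemLp (fun x => f x ^ (a * s)) (ENNReal.ofReal (1 / a)) μ := by
  have A : ENNReal.ofReal (1 / a) ≠ 0 := by
    rw [Ne, ENNReal.ofReal_eq_zero, not_le]; positivity
  have B : ENNReal.ofReal (1 / a) ≠ ⊤ := ENNReal.ofReal_ne_top
  have hm : AEStronglyMeasurable (fun x => f x ^ (a * s)) μ := by
    apply Measurable.aestronglyMeasurable
    fun_prop
  rw [← memLp_norm_rpow_iff hm A B, ENNReal.toReal_ofReal (by positivity),
    ENNReal.div_self A B, memLp_one_iff_integrable]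
  apply hint.congr
  refine Filter.Eventually.of_forall fun x => ?_
  show f x ^ s = ‖f x ^ (a * s)‖ ^ (1 / a)
  rw [Real.norm_of_nonneg (Real.rpow_nonneg (hfnn x) _), ← Real.rpow_mul (hfnn x)]
  congr 1
  field_simp

private lemma holder_aux {Ω : Type*} [MeasurableSpace Ω] (μ : Measure Ω)
    (f : Ω → ℝ) (hf : Measurable f) (hfnn : ∀ x, 0 ≤ f x)
    {s t a b : ℝ} (hs : 0 < s) (ht : 0 < t) (ha : 0 < a) (hb : 0 < b) (hab : a + b = 1)
    (hint : ∀ u : ℝ, 0 < u → Integrable (fun x => f x ^ u) μ) :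
    ∫ x, f x ^ (a * s + b * t) ∂μ ≤ (∫ x, f x ^ s ∂μ) ^ a * (∫ x, f x ^ t ∂μ) ^ b := by
  have hpq : (1 / a).HolderConjugate (1 / b) := by
    constructor
    · rw [one_div, one_div, inv_inv, inv_inv, inv_one]; exact hab
    · positivity
    · positivity
  have key := integral_mul_le_Lp_mul_Lq_of_nonneg hpq
    (Filter.Eventually.of_forall fun x => Real.rpow_nonneg (hfnn x) (a * s))
    (Filter.Eventually.of_forall fun x => Real.rpow_nonneg (hfnn x) (b * t))
    (memLp_aux μ f hf hfnn hs ha (hint s hs))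
    (memLp_aux μ f hf hfnn ht hb (hint t ht))
  have hL : ∫ x, f x ^ (a * s) * f x ^ (b * t) ∂μ = ∫ x, f x ^ (a * s + b * t) ∂μ := by
    refine integral_congr_ae (Filter.Eventually.of_forall fun x => ?_)
    exact (Real.rpow_add' (hfnn x) (by positivity)).symm
  have hR1 : ∫ x, (f x ^ (a * s)) ^ (1 / a) ∂μ = ∫ x, f x ^ s ∂μ := by
    refine integral_congr_ae (Filter.Eventually.of_forall fun x => ?_)
    show (f x ^ (a * s)) ^ (1 / a) = f x ^ s
    rw [← Real.rpow_mul (hfnn x)]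
    congr 1
    field_simp
  have hR2 : ∫ x, (f x ^ (b * t)) ^ (1 / b) ∂μ = ∫ x, f x ^ t ∂μ := by
    refine integral_congr_ae (Filter.Eventually.of_forall fun x => ?_)
    show (f x ^ (b * t)) ^ (1 / b) = f x ^ t
    rw [← Real.rpow_mul (hfnn x)]
    congr 1
    field_simp
  rw [hL, hR1, hR2, one_div_one_div, one_div_one_div] at key
  exact key

theorem stmt_12 {Ω : Type*} [MeasurableSpace Ω] (μ : Measure Ω) [IsProbabilityMeasure μ]
    (f : Ω → ℝ) (hf : Measurable f) (hfnn : ∀ x, 0 ≤ f x)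
    (q : ℝ) (hq : 0 < q)
    (hint : ∀ s : ℝ, 0 < s → Integrable (fun x => f x ^ s) μ)
    (hpos : ∀ s : ℝ, 0 < s → 0 < ∫ x, f x ^ s ∂μ) :
    ConvexOn ℝ (Set.Ioi 0) (fun r : ℝ => r * Real.log (∫ x, f x ^ (q / r) ∂μ)) := by
  refine ⟨convex_Ioi 0, fun r₁ hr₁ r₂ hr₂ a b ha hb hab => ?_⟩
  simp only [smul_eq_mul] at *
  rcases eq_or_lt_of_le ha with ha0 | ha0
  · have hb1 : b = 1 := by linarith
    simp [← ha0, hb1]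
  rcases eq_or_lt_of_le hb with hb0 | hb0
  · have ha1 : a = 1 := by linarith
    simp [← hb0, ha1]
  have hr₁' : 0 < r₁ := hr₁
  have hr₂' : 0 < r₂ := hr₂
  set r := a * r₁ + b * r₂ with hr
  have hrpos : 0 < r := by positivity
  set a' := a * r₁ / r with ha'
  set b' := b * r₂ / r with hb'
  have ha'pos : 0 < a' := by positivity
  have hb'pos : 0 < b' := by positivity
  have ha'b' : a' + b' = 1 := by
    rw [ha', hb', ← add_div, div_eq_one_iff_eq hrpos.ne']
  have hs : 0 < q / r₁ := by positivity
  have ht : 0 < q / r₂ := by positivity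
  have h1 : a' * (q / r₁) = a * q / r := by
    rw [ha']; field_simp
  have h2 : b' * (q / r₂) = b * q / r := by
    rw [hb']; field_simp
  have hqr : q / r = a' * (q / r₁) + b' * (q / r₂) := by
    rw [h1, h2, ← add_div, ← add_mul, hab, one_mul]
  have key := holder_aux μ f hf hfnn hs ht ha'pos hb'pos ha'b' hint
  rw [← hqr] at key
  have hI : 0 < ∫ x, f x ^ (q / r) ∂μ := hpos _ (by positivity)
  have hI1 : 0 < ∫ x, f x ^ (q / r₁) ∂μ := hpos _ hs
  have hI2 : 0 < ∫ x, f x ^ (q / r₂) ∂μ := hpos _ ht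
  have hlog : Real.log (∫ x, f x ^ (q / r) ∂μ) ≤
      a' * Real.log (∫ x, f x ^ (q / r₁) ∂μ) + b' * Real.log (∫ x, f x ^ (q / r₂) ∂μ) := by
    calc Real.log (∫ x, f x ^ (q / r) ∂μ)
        ≤ Real.log ((∫ x, f x ^ (q / r₁) ∂μ) ^ a' * (∫ x, f x ^ (q / r₂) ∂μ) ^ b') :=
          Real.log_le_log hI key
      _ = a' * Real.log (∫ x, f x ^ (q / r₁) ∂μ) + b' * Real.log (∫ x, f x ^ (q / r₂) ∂μ) := by
          rw [Real.log_mul (by positivity) (by positivity), Real.log_rpow hI1, Real.log_rpow hI2]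
  calc r * Real.log (∫ x, f x ^ (q / r) ∂μ)
      ≤ r * (a' * Real.log (∫ x, f x ^ (q / r₁) ∂μ) + b' * Real.log (∫ x, f x ^ (q / r₂) ∂μ)) :=
        mul_le_mul_of_nonneg_left hlog hrpos.le
    _ = a * (r₁ * Real.log (∫ x, f x ^ (q / r₁) ∂μ)) +
        b * (r₂ * Real.log (∫ x, f x ^ (q / r₂) ∂μ)) := by
        rw [ha', hb']
        field_simp
end

section
/- Let 0 < q ≤ 1, let μ be a probability measure, and let f be a function with ‖f‖_{L²(μ)} < ∞. Suppose the Poincaré-Wirtinger inequality C_P² ‖∇f‖_{L²}² ≥ ‖f‖_{L²}² - ‖f‖_{L¹}² holds. Then ‖f‖_{L^q}² + ((2-q)/q) C_P² ‖∇f‖_{L²}² - ‖f‖_{L²}² ≥ 0, where ‖f‖_{L^q} = (∫|f|^q dμ)^{1/q}. -/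
open MeasureTheory

open ENNReal

theorem stmt_16 {Ω : Type*} [MeasurableSpace Ω] (μ : Measure Ω) [IsProbabilityMeasure μ]
    (f : Ω → ℝ) (hf : Measurable f)
    (q : ℝ) (hq0 : 0 < q) (hq1 : q ≤ 1)
    (hf1 : Integrable (fun x => |f x|) μ)
    (hf2 : Integrable (fun x => f x ^ 2) μ)
    (hfq : Integrable (fun x => |f x| ^ q) μ)
    (C_P D : ℝ) (hD : 0 ≤ D)
    (hP : (∫ x, f x ^ 2 ∂μ) - (∫ x, |f x| ∂μ) ^ 2 ≤ C_P ^ 2 * D) :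
    0 ≤ (∫ x, |f x| ^ q ∂μ) ^ (2 / q) + (2 - q) / q * C_P ^ 2 * D - ∫ x, f x ^ 2 ∂μ := by
  set A := ∫ x, f x ^ 2 ∂μ with hAdef
  set I1 := ∫ x, |f x| ∂μ with hI1def
  set Iq := ∫ x, |f x| ^ q ∂μ with hIqdef
  have hA0 : 0 ≤ A := integral_nonneg fun x => sq_nonneg _
  have hI10 : 0 ≤ I1 := integral_nonneg fun x => abs_nonneg _
  have hIq0 : 0 ≤ Iq := integral_nonneg fun x => Real.rpow_nonneg (abs_nonneg _) _
  -- case q = 1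
  rcases eq_or_lt_of_le hq1 with hq1' | hq1'
  · subst hq1'
    simp only [Real.rpow_one, div_one] at *
    have hIqI1 : Iq = I1 := by simp [hIqdef, hI1def]
    rw [show ((2:ℝ)) = ((2:ℕ):ℝ) by norm_num, Real.rpow_natCast, hIqI1]
    push_cast
    nlinarith
  -- case A = 0
  rcases hA0.eq_or_lt with hA | hA
  · have hz : (fun x => f x ^ 2) =ᵐ[μ] 0 :=
      (integral_eq_zero_iff_of_nonneg (fun x => sq_nonneg _) hf2).mp hA.symm
    have hfz : ∀ᵐ x ∂μ, f x = 0 := by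
      filter_upwards [hz] with x hx
      exact (pow_eq_zero_iff two_ne_zero).mp hx
    have hI1z : I1 = 0 := by
      rw [hI1def]
      rw [integral_eq_zero_iff_of_nonneg_ae (Filter.Eventually.of_forall fun x => abs_nonneg _) hf1]
      filter_upwards [hfz] with x hx; simp [hx]
    have hIqz : Iq = 0 := by
      rw [hIqdef]
      rw [integral_eq_zero_iff_of_nonneg_ae
        (Filter.Eventually.of_forall fun x => Real.rpow_nonneg (abs_nonneg _) _) hfq]
      filter_upwards [hfz] with x hx; simp [hx, Real.zero_rpow hq0.ne']
    rw [hIqz, Real.zero_rpow (div_pos two_pos hq0).ne']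
    rw [hI1z, ← hA] at hP
    have hr : 0 < (2-q)/q := div_pos (by linarith) hq0
    nlinarith
  -- main case: q < 1, 0 < A
  have hq2 : (0:ℝ) < 2 - q := by linarith
  have h1q : (0:ℝ) < 1 - q := by linarith
  -- MemLp facts
  have h2 : MemLp f 2 μ := by
    have h20 : (2 : ℝ≥0∞) ≠ 0 := by norm_num
    have h2t : (2 : ℝ≥0∞) ≠ ⊤ := by norm_num
    rw [← memLp_norm_rpow_iff hf.aestronglyMeasurable h20 h2t,
      ENNReal.div_self h20 h2t, memLp_one_iff_integrable]
    refine hf2.congr ?_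
    filter_upwards with x
    rw [ENNReal.toReal_ofNat, Real.norm_eq_abs,
      show ((2:ℝ)) = ((2:ℕ):ℝ) by norm_num, Real.rpow_natCast, sq_abs]
  have hqm : MemLp f (ENNReal.ofReal q) μ := by
    have hq0' : ENNReal.ofReal q ≠ 0 := by rw [Ne, ENNReal.ofReal_eq_zero]; exact hq0.not_ge
    rw [← memLp_norm_rpow_iff hf.aestronglyMeasurable hq0' ENNReal.ofReal_ne_top,
      ENNReal.div_self hq0' ENNReal.ofReal_ne_top, memLp_one_iff_integrable]
    refine hfq.congr ?_
    filter_upwards with x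
    rw [ENNReal.toReal_ofReal hq0.le, Real.norm_eq_abs]
  -- interpolation exponents
  set a : ℝ := q / (2 - q) with hadef
  set b : ℝ := 2 * (1 - q) / (2 - q) with hbdef
  have ha0 : 0 < a := by positivity
  have hb0 : 0 < b := by positivity
  have hab : a + b = 1 := by rw [hadef, hbdef]; field_simp; ring
  have hga : MemLp (fun x => |f x| ^ a) (ENNReal.ofReal (2 - q)) μ := by
    have h := hqm.norm_rpow_div (ENNReal.ofReal a)
    rw [ENNReal.toReal_ofReal ha0.le] at h
    rw [← ENNReal.ofReal_div_of_pos ha0, show q / a = 2 - q by rw [hadef]; field_simp] at h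
    simpa [Real.norm_eq_abs] using h
  have hgb : MemLp (fun x => |f x| ^ b) (ENNReal.ofReal ((2 - q) / (1 - q))) μ := by
    have h := h2.norm_rpow_div (ENNReal.ofReal b)
    rw [ENNReal.toReal_ofReal hb0.le] at h
    rw [show (2 : ℝ≥0∞) = ENNReal.ofReal 2 by norm_num,
      ← ENNReal.ofReal_div_of_pos hb0,
      show 2 / b = (2 - q) / (1 - q) by rw [hbdef]; field_simp] at h
    simpa [Real.norm_eq_abs] using h
  -- Hölder
  have hpq : Real.HolderConjugate (2 - q) ((2 - q) / (1 - q)) := by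
    constructor
    · field_simp; ring
    · linarith
    · positivity
  have hol := integral_mul_le_Lp_mul_Lq_of_nonneg hpq
    (Filter.Eventually.of_forall fun x => Real.rpow_nonneg (abs_nonneg (f x)) a)
    (Filter.Eventually.of_forall fun x => Real.rpow_nonneg (abs_nonneg (f x)) b)
    hga hgb
  -- simplify Hölder's three integrals
  have e1 : ∫ x, |f x| ^ a * |f x| ^ b ∂μ = I1 := by
    refine integral_congr_ae (Filter.Eventually.of_forall fun x => ?_)
    show |f x| ^ a * |f x| ^ b = |f x|
    rw [← Real.rpow_add_of_nonneg (abs_nonneg _) ha0.le hb0.le, hab, Real.rpow_one]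
  have e2 : ∫ x, (|f x| ^ a) ^ (2 - q) ∂μ = Iq := by
    refine integral_congr_ae (Filter.Eventually.of_forall fun x => ?_)
    show (|f x| ^ a) ^ (2 - q) = |f x| ^ q
    rw [← Real.rpow_mul (abs_nonneg _), show a * (2 - q) = q by rw [hadef]; field_simp]
  have e3 : ∫ x, (|f x| ^ b) ^ ((2 - q) / (1 - q)) ∂μ = A := by
    refine integral_congr_ae (Filter.Eventually.of_forall fun x => ?_)
    show (|f x| ^ b) ^ ((2 - q) / (1 - q)) = f x ^ 2
    rw [← Real.rpow_mul (abs_nonneg _),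
      show b * ((2 - q)/(1 - q)) = 2 by rw [hbdef]; field_simp,
      show ((2:ℝ)) = ((2:ℕ):ℝ) by norm_num, Real.rpow_natCast, sq_abs]
  rw [e1, e2, e3, one_div_div] at hol
  -- hol : I1 ≤ Iq ^ (1/(2-q)) * A ^ ((1-q)/(2-q))
  set B : ℝ := Iq ^ (2 / (2 - q)) * A ^ (2 * (1 - q) / (2 - q)) with hBdef
  have hB0 : 0 ≤ B := mul_nonneg (Real.rpow_nonneg hIq0 _) (Real.rpow_nonneg hA0 _)
  have hBineq : I1 ^ 2 ≤ B := by
    have h := mul_self_le_mul_self hI10 hol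
    calc I1 ^ 2 = I1 * I1 := sq I1
      _ ≤ (Iq ^ (1/(2-q)) * A ^ ((1-q)/(2-q))) * (Iq ^ (1/(2-q)) * A ^ ((1-q)/(2-q))) := h
      _ = (Iq ^ (1/(2-q)) * Iq ^ (1/(2-q))) * (A ^ ((1-q)/(2-q)) * A ^ ((1-q)/(2-q))) := by ring
      _ = B := by
          rw [← Real.rpow_add_of_nonneg hIq0 (by positivity) (by positivity),
            ← Real.rpow_add_of_nonneg hA0 (by positivity) (by positivity), hBdef]
          congr 1 <;> congr 1 <;> ring
  set r : ℝ := (2 - q) / q with hrdef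
  have hr1 : 1 ≤ r := by rw [hrdef, le_div_iff₀ hq0]; linarith
  have hZ : (A : ℝ) ^ r ≠ 0 := (Real.rpow_pos_of_pos hA r).ne'
  -- key identity
  have hAr : A ^ ((2:ℝ) * (1 - q) / q) * A = A ^ r := by
    nth_rewrite 2 [← Real.rpow_one A]
    rw [← Real.rpow_add hA]
    congr 1
    rw [hrdef]; field_simp; ring
  have hkey : A * (B / A) ^ r = Iq ^ (2 / q) := by
    rw [Real.div_rpow hB0 hA0, hBdef,
      Real.mul_rpow (Real.rpow_nonneg hIq0 _) (Real.rpow_nonneg hA0 _),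
      ← Real.rpow_mul hIq0, ← Real.rpow_mul hA0,
      show 2 / (2 - q) * r = 2 / q by rw [hrdef]; field_simp,
      show 2 * (1 - q) / (2 - q) * r = 2 * (1 - q) / q by rw [hrdef]; field_simp]
    calc A * (Iq ^ (2/q) * A ^ (2*(1-q)/q) / A ^ r)
        = Iq ^ (2/q) * ((A ^ (2*(1-q)/q) * A) / A ^ r) := by ring
      _ = Iq ^ (2/q) := by rw [hAr, div_self hZ, mul_one]
  -- Bernoulli
  have hs : (-1:ℝ) ≤ B / A - 1 := by
    have : 0 ≤ B / A := div_nonneg hB0 hA0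
    linarith
  have hbern := one_add_mul_self_le_rpow_one_add hs hr1
  rw [show (1:ℝ) + (B / A - 1) = B / A by ring] at hbern
  have hmain : A + r * (B - A) ≤ Iq ^ (2 / q) := by
    rw [← hkey]
    have h := mul_le_mul_of_nonneg_left hbern hA0
    calc A + r * (B - A) = A * (1 + r * (B / A - 1)) := by field_simp
      _ ≤ A * (B / A) ^ r := h
  have hfin : 0 ≤ r * (B - A + C_P ^ 2 * D) := by
    apply mul_nonneg (by linarith)
    linarith
  nlinarith [hmain, hfin]
end

section
/- For real numbers α with 1 ≤ α ≤ 2 and positive reals u, v, the quadratic form Q(a,b) = c₁ a² + c₂ a b + c₃ b² is positive semidefinite, where c₁ = (α-2)(u^{α/2} - v^{α/2}) u^{α/2-2} + α u^{α-2}, c₂ = -2α u^{α/2-1} v^{α/2-1}, c₃ = -(α-2)(u^{α/2} - v^{α/2}) v^{α/2-2} + α v^{α-2}. -/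
private lemma key_aux (α x y u v a b : ℝ) (hα1 : 1 ≤ α) (hα2 : α ≤ 2)
    (hx : 0 < x) (hy : 0 < y) (hu : 0 < u) (hv : 0 < v) :
    0 ≤ ((α - 2) * (x - y) * (x / u ^ 2) + α * (x ^ 2 / u ^ 2)) * a ^ 2
      + (-2 * α * (x / u) * (y / v)) * a * b
      + (-(α - 2) * (x - y) * (y / v ^ 2) + α * (y ^ 2 / v ^ 2)) * b ^ 2 := by
  have h : ((α - 2) * (x - y) * (x / u ^ 2) + α * (x ^ 2 / u ^ 2)) * a ^ 2
      + (-2 * α * (x / u) * (y / v)) * a * b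
      + (-(α - 2) * (x - y) * (y / v ^ 2) + α * (y ^ 2 / v ^ 2)) * b ^ 2
      = (2 * (α - 1) * (x * v * a - y * u * b) ^ 2
        + (2 - α) * x * y * (a * v - b * u) ^ 2) / (u ^ 2 * v ^ 2) := by
    field_simp
    ring
  rw [h]
  apply div_nonneg
  · have h1 : 0 ≤ 2 * (α - 1) * (x * v * a - y * u * b) ^ 2 := by
      apply mul_nonneg (by linarith) (sq_nonneg _)
    have h2 : 0 ≤ (2 - α) * x * y * (a * v - b * u) ^ 2 := by
      apply mul_nonneg (mul_nonneg (mul_nonneg (by linarith) hx.le) hy.le) (sq_nonneg _)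
    linarith
  · positivity

theorem stmt_18 (α u v : ℝ) (hα1 : 1 ≤ α) (hα2 : α ≤ 2) (hu : 0 < u) (hv : 0 < v)
    (a b : ℝ) :
    0 ≤ ((α - 2) * (u ^ (α / 2) - v ^ (α / 2)) * u ^ (α / 2 - 2) + α * u ^ (α - 2)) * a ^ 2
      + (-2 * α * u ^ (α / 2 - 1) * v ^ (α / 2 - 1)) * a * b
      + (-(α - 2) * (u ^ (α / 2) - v ^ (α / 2)) * v ^ (α / 2 - 2) + α * v ^ (α - 2)) * b ^ 2 := by
  have sq2 : ∀ w : ℝ, 0 < w → w ^ (2:ℝ) = w ^ 2 := by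
    intro w hw
    rw [← Real.rpow_natCast w 2]; norm_num
  have half : ∀ w : ℝ, 0 < w → w ^ α = (w ^ (α/2)) ^ 2 := by
    intro w hw
    rw [← Real.rpow_natCast (w ^ (α/2)) 2, ← Real.rpow_mul hw.le]
    norm_num
  have e1 : u ^ (α / 2 - 2) = u ^ (α/2) / u ^ 2 := by
    rw [Real.rpow_sub hu, sq2 u hu]
  have e2 : u ^ (α - 2) = (u ^ (α/2)) ^ 2 / u ^ 2 := by
    rw [Real.rpow_sub hu, sq2 u hu, half u hu]
  have e3 : u ^ (α / 2 - 1) = u ^ (α/2) / u := by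
    rw [Real.rpow_sub hu, Real.rpow_one]
  have f1 : v ^ (α / 2 - 2) = v ^ (α/2) / v ^ 2 := by
    rw [Real.rpow_sub hv, sq2 v hv]
  have f2 : v ^ (α - 2) = (v ^ (α/2)) ^ 2 / v ^ 2 := by
    rw [Real.rpow_sub hv, sq2 v hv, half v hv]
  have f3 : v ^ (α / 2 - 1) = v ^ (α/2) / v := by
    rw [Real.rpow_sub hv, Real.rpow_one]
  rw [e1, e2, e3, f1, f2, f3]
  exact key_aux α (u ^ (α/2)) (v ^ (α/2)) u v a b hα1 hα2
    (Real.rpow_pos_of_pos hu _) (Real.rpow_pos_of_pos hv _) hu hv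
end
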